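/- The polynomials q_n in variables y_1, y_2, ..., defined by q_0 = 1 and the recursion q_n = (1/n) ∑_{k=1}^{n} y_k q_{n-k}, admit the closed-form expression q_n = ∑_{j_1 + 2j_2 + ... + n j_n = n} ∏_{k=1}^{n} (1/j_k!) (y_k / k)^{j_k}. -/

import Mathlib

open MvPolynomial Finset

noncomputable def wgt (n : ℕ) (P : Nat.Partition n) : MvPolynomial ℕ ℚ :=
  ∏ k ∈ Finset.Icc 1 n,
    C (1 / ((Multiset.count k P.parts).factorial : ℚ)) *
      (C (1 / (k : ℚ)) * X k) ^ Multiset.count k P.parts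

lemma parts_mem_Icc {n : ℕ} (P : Nat.Partition n) {i : ℕ} (hi : i ∈ P.parts) :
    i ∈ Finset.Icc 1 n := by
  rw [Finset.mem_Icc]
  refine ⟨P.parts_pos hi, ?_⟩
  calc i ≤ P.parts.sum := Multiset.single_le_sum (fun x _ => Nat.zero_le x) i hi
  _ = n := P.parts_sum

lemma wgt_extend {n m : ℕ} (h : m ≤ n) (P : Nat.Partition m) :
    wgt m P = ∏ l ∈ Finset.Icc 1 n,
      C (1 / ((Multiset.count l P.parts).factorial : ℚ)) *
        (C (1 / (l : ℚ)) * X l) ^ Multiset.count l P.parts := by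
  unfold wgt
  apply Finset.prod_subset (Finset.Icc_subset_Icc_right h)
  intro x hx hx'
  have : Multiset.count x P.parts = 0 := by
    rw [Multiset.count_eq_zero]
    exact fun hmem => hx' (parts_mem_Icc P hmem)
  simp [this, Nat.factorial]

lemma key (n k : ℕ) (hk1 : 1 ≤ k) (hkn : k ≤ n) :
    ∑ P : Nat.Partition n, C ((k * Multiset.count k P.parts : ℕ) : ℚ) * wgt n P
      = X k * ∑ P' : Nat.Partition (n - k), wgt (n - k) P' := by
  classical
  rw [Finset.mul_sum]
  rw [← Finset.sum_filter_of_ne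
    (p := fun P : Nat.Partition n => k ∈ P.parts) (s := Finset.univ)
    (fun P _ hne => by
      by_contra hmem
      rw [Multiset.count_eq_zero_of_notMem hmem] at hne
      simp at hne)]
  refine Finset.sum_bij'
    (i := fun P hP => (⟨P.parts.erase k, fun hi => P.parts_pos (Multiset.mem_of_mem_erase hi), ?_⟩ : Nat.Partition (n - k)))
    (j := fun P' _ => (⟨k ::ₘ P'.parts, ?_, ?_⟩ : Nat.Partition n))
    ?_ ?_ ?_ ?_ ?_
  · -- erase sum
    have hP' : k ∈ P.parts := (Finset.mem_filter.mp hP).2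
    have := Multiset.cons_erase hP'
    have hs : k + (P.parts.erase k).sum = n := by
      rw [← Multiset.sum_cons, this, P.parts_sum]
    omega
  · -- cons pos
    intro i hi
    rcases Multiset.mem_cons.mp hi with h | h
    · omega
    · exact P'.parts_pos h
  · -- cons sum
    rw [Multiset.sum_cons, P'.parts_sum]; omega
  · intro a ha; exact Finset.mem_univ _
  · intro a ha
    simp [Multiset.mem_cons]
  · intro a ha
    apply Nat.Partition.ext
    simp only
    exact Multiset.cons_erase (Finset.mem_filter.mp ha).2
  · intro a ha
    apply Nat.Partition.ext
    simp only
    exact Multiset.erase_cons_head _ _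
  · -- main value identity
    intro P hP
    have hkP : k ∈ P.parts := (Finset.mem_filter.mp hP).2
    set j := Multiset.count k P.parts with hjdef
    have hj1 : 1 ≤ j := Multiset.one_le_count_iff_mem.mpr hkP
    obtain ⟨m, hm⟩ : ∃ m, j = m + 1 := ⟨j - 1, by omega⟩
    rw [wgt_extend (show n - k ≤ n by omega)]
    unfold wgt
    have hkIcc : k ∈ Finset.Icc 1 n := Finset.mem_Icc.mpr ⟨hk1, hkn⟩
    rw [← Finset.mul_prod_erase _ _ hkIcc, ← Finset.mul_prod_erase _ _ hkIcc]
    have hrest : ∏ l ∈ (Finset.Icc 1 n).erase k,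
          C (1 / ((Multiset.count l (P.parts.erase k)).factorial : ℚ)) *
            (C (1 / (l : ℚ)) * X l) ^ Multiset.count l (P.parts.erase k)
        = ∏ l ∈ (Finset.Icc 1 n).erase k,
          C (1 / ((Multiset.count l P.parts).factorial : ℚ)) *
            (C (1 / (l : ℚ)) * X l) ^ Multiset.count l P.parts := by
      apply Finset.prod_congr rfl
      intro x hx
      rw [Multiset.count_erase_of_ne (Finset.ne_of_mem_erase hx)]
    rw [hrest]
    have hck : Multiset.count k (P.parts.erase k) = m := by
      rw [Multiset.count_erase_self, ← hjdef]; omega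
    rw [hck, ← hjdef, hm]
    -- scalar identity
    have hk0 : (k : ℚ) ≠ 0 := Nat.cast_ne_zero.mpr (by omega)
    have hfac : ((m + 1).factorial : ℚ) = (m + 1) * m.factorial := by
      rw [Nat.factorial_succ]; push_cast; ring
    have hC : (C ((k * (m + 1) : ℕ) : ℚ) * (C (1 / ((m + 1).factorial : ℚ)) * C (1 / (k : ℚ)))
        : MvPolynomial ℕ ℚ) = C (1 / (m.factorial : ℚ)) := by
      rw [← C_mul, ← C_mul]
      congr 1
      have hf0 : (m.factorial : ℚ) ≠ 0 := Nat.cast_ne_zero.mpr m.factorial_ne_zero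
      field_simp [hfac]
      rw [Nat.factorial_succ]; push_cast; ring
    calc C ((k * (m + 1) : ℕ) : ℚ) *
          (C (1 / ((m + 1).factorial : ℚ)) * (C (1 / (k : ℚ)) * X k) ^ (m + 1) *
            ∏ l ∈ (Finset.Icc 1 n).erase k,
              C (1 / ((Multiset.count l P.parts).factorial : ℚ)) *
                (C (1 / (l : ℚ)) * X l) ^ Multiset.count l P.parts)
        = (C ((k * (m + 1) : ℕ) : ℚ) * (C (1 / ((m + 1).factorial : ℚ)) * C (1 / (k : ℚ)))) *
            (X k * ((C (1 / (k : ℚ)) * X k) ^ m *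
            ∏ l ∈ (Finset.Icc 1 n).erase k,
              C (1 / ((Multiset.count l P.parts).factorial : ℚ)) *
                (C (1 / (l : ℚ)) * X l) ^ Multiset.count l P.parts)) := by
          rw [pow_succ]; ring
      _ = X k * (C (1 / (m.factorial : ℚ)) * (C (1 / (k : ℚ)) * X k) ^ m *
            ∏ l ∈ (Finset.Icc 1 n).erase k,
              C (1 / ((Multiset.count l P.parts).factorial : ℚ)) *
                (C (1 / (l : ℚ)) * X l) ^ Multiset.count l P.parts) := by
          rw [hC]; ring

lemma sum_k_count {n : ℕ} (P : Nat.Partition n) :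
    ∑ k ∈ Finset.Icc 1 n, k * Multiset.count k P.parts = n := by
  have h1 : P.parts.sum = ∑ a ∈ P.parts.toFinset, Multiset.count a P.parts • a := by
    conv_lhs => rw [← Multiset.map_id P.parts]
    rw [Finset.sum_multiset_map_count]
    rfl
  have h2 : ∑ a ∈ P.parts.toFinset, Multiset.count a P.parts • a
      = ∑ k ∈ Finset.Icc 1 n, Multiset.count k P.parts • k := by
    apply Finset.sum_subset
    · intro x hx
      exact parts_mem_Icc P (Multiset.mem_toFinset.mp hx)
    · intro x _ hx
      rw [Multiset.count_eq_zero_of_notMem (fun h => hx (Multiset.mem_toFinset.mpr h))]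
      simp
  calc ∑ k ∈ Finset.Icc 1 n, k * Multiset.count k P.parts
      = P.parts.sum := by rw [h1.trans h2]; simp [mul_comm, smul_eq_mul]
    _ = n := P.parts_sum

/-- The cycle index polynomials `q_n`, defined by `q_0 = 1` and
`q_n = (1/n) ∑_{k=1}^n y_k q_{n-k}`, have the closed form
`q_n = ∑_{j_1 + 2 j_2 + ⋯ + n j_n = n} ∏_{k=1}^n (1/j_k!) (y_k / k)^{j_k}`
(the tuples `(j_1, …, j_n)` with `∑ k j_k = n` being parametrized by the
partitions `P` of `n`, with `j_k` the multiplicity of the part `k`). -/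
theorem stmt2 (q : ℕ → MvPolynomial ℕ ℚ) (hq0 : q 0 = 1)
    (hqrec : ∀ n : ℕ, 1 ≤ n →
      q n = C (1 / (n : ℚ)) * ∑ k ∈ Finset.Icc 1 n, X k * q (n - k))
    (n : ℕ) :
    q n = ∑ P : Nat.Partition n, ∏ k ∈ Finset.Icc 1 n,
      C (1 / ((Multiset.count k P.parts).factorial : ℚ)) *
        (C (1 / (k : ℚ)) * X k) ^ Multiset.count k P.parts := by
  suffices h : ∀ n, q n = ∑ P : Nat.Partition n, wgt n P by
    rw [h n]; rfl
  clear n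
  intro n
  induction n using Nat.strong_induction_on with
  | _ n ih =>
    rcases Nat.eq_zero_or_pos n with rfl | hn
    · rw [hq0]
      simp [wgt]
    · rw [hqrec n hn]
      have step1 : ∀ k ∈ Finset.Icc 1 n, X k * q (n - k)
          = ∑ P : Nat.Partition n, C ((k * Multiset.count k P.parts : ℕ) : ℚ) * wgt n P := by
        intro k hk
        rw [Finset.mem_Icc] at hk
        rw [ih (n - k) (by omega), ← key n k hk.1 hk.2]
      rw [Finset.sum_congr rfl step1, Finset.sum_comm]
      rw [Finset.mul_sum]
      apply Finset.sum_congr rfl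
      intro P _
      rw [← Finset.sum_mul, ← map_sum C, ← Nat.cast_sum, sum_k_count P, ← mul_assoc, ← C_mul]
      rw [one_div_mul_cancel (by exact_mod_cast Nat.pos_iff_ne_zero.mp hn : (n:ℚ) ≠ 0)]
      simp
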